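/- Characterization of Bayesian equilibria (Theorem 1, abstract form): Let Γ be a set (strategy profiles), let I be a finite index set (players), and for each i ∈ I let D_i(γ_i, γ'; t_i) ∈ ℝ denote the gain U_i(γ_i, γ'_{-i}; t_i) − U_i(γ'; t_i) of deviating to γ_i at type t_i. Suppose M is a nonempty family of tuples ν = (ν_i)_{i∈I} of probability measures on the type spaces T_i, closed under the operation ν ↦ ν' where ν'_i = λν_i + (1−λ)δ_{t'_i} (λ ∈ (0,1], t'_i ∈ T_i arbitrary) and ν'_j = ν_j for j ≠ i, and suppose that for every ν ∈ M the integrals ∫ D_i(γ_i, γ'; t_i) dν_i(t_i) are finite. Define γ* to be a Bayesian equilibrium if D_i(γ_i, γ*; t_i) ≤ 0 for all i, t_i, γ_i, and a ν-Nash equilibrium if ∫ D_i(γ_i, γ*; t_i) dν_i(t_i) ≤ 0 for all i, γ_i. Then γ* is a Bayesian equilibrium if and only if γ* is a ν-Nash equilibrium for every ν ∈ M. -/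

import Mathlib

open MeasureTheory

lemma integral_dirac_of_integrable {α : Type*} [MeasurableSpace α] {f : α → ℝ} {a : α}
    (hf : Integrable f (Measure.dirac a)) : ∫ x, f x ∂(Measure.dirac a) = f a := by
  have hmk := hf.1.ae_eq_mk
  have ha : f a = hf.1.mk f a := by
    by_contra h
    have hnull : Measure.dirac a {x | ¬ f x = hf.1.mk f x} = 0 := hmk
    have : (Measure.dirac a) {x | ¬ f x = hf.1.mk f x} = 1 :=
      Measure.dirac_apply_of_mem h
    simp [hnull] at this
  rw [integral_congr_ae hmk, integral_dirac' _ a hf.1.stronglyMeasurable_mk, ha]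

/-- Abstract characterization of Bayesian equilibria: with `D i γᵢ γ' tᵢ` the deviation gain
of player `i` at type `tᵢ`, and `M` a nonempty family of tuples of probability measures,
closed under mixing any coordinate with a Dirac measure, on which all deviation gains are
integrable, a profile `γ*` is a Bayesian equilibrium (pointwise no profitable deviation)
iff it is a Nash equilibrium of the surrogate game `G*(ν)` for every `ν ∈ M`. -/
theorem bayesian_equilibrium_iff_nash_for_all_dominating
    {I : Type*} [Fintype I] [DecidableEq I]
    {T : I → Type*} [∀ i, MeasurableSpace (T i)]
    {Γi : I → Type*}
    (D : ∀ i : I, Γi i → (∀ j, Γi j) → T i → ℝ)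
    (M : Set (∀ i, Measure (T i)))
    (hM_ne : M.Nonempty)
    (hM_prob : ∀ ν ∈ M, ∀ i, IsProbabilityMeasure (ν i))
    (hM_closed : ∀ ν ∈ M, ∀ (i : I) (lam : ℝ), 0 < lam → lam ≤ 1 → ∀ t' : T i,
      Function.update ν i
        (ENNReal.ofReal lam • ν i + ENNReal.ofReal (1 - lam) • Measure.dirac t') ∈ M)
    (hM_int : ∀ ν ∈ M, ∀ (i : I) (γi : Γi i) (γ' : ∀ j, Γi j),
      Integrable (fun t => D i γi γ' t) (ν i))
    (γstar : ∀ j, Γi j) :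
    (∀ (i : I) (t : T i) (γi : Γi i), D i γi γstar t ≤ 0) ↔
      (∀ ν ∈ M, ∀ (i : I) (γi : Γi i), ∫ t, D i γi γstar t ∂(ν i) ≤ 0) := by
  constructor
  · intro hBE ν hν i γi
    exact integral_nonpos (fun t => hBE i t γi)
  · intro hNE i t' γi
    by_contra hpos
    push_neg at hpos
    obtain ⟨ν, hν⟩ := hM_ne
    set f : T i → ℝ := fun t => D i γi γstar t with hf
    set c : ℝ := ∫ t, f t ∂(ν i) with hc
    set d : ℝ := f t' with hd
    have hd0 : 0 < d := hpos
    have hden : 0 < |c| + d := by positivity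
    set lam : ℝ := d / (2 * (|c| + d)) with hlam
    have hlam0 : 0 < lam := by positivity
    have hlam1 : lam ≤ 1 := by
      rw [hlam, div_le_one (by positivity)]
      nlinarith [abs_nonneg c]
    have hlam_half : lam * (|c| + d) = d / 2 := by
      rw [hlam, div_mul_eq_mul_div, div_eq_iff (by positivity)]
      ring
    have hmem := hM_closed ν hν i lam hlam0 hlam1 t'
    have hint := hM_int _ hmem i γi γstar
    have hupd : Function.update ν i
        (ENNReal.ofReal lam • ν i + ENNReal.ofReal (1 - lam) • Measure.dirac t') i
        = ENNReal.ofReal lam • ν i + ENNReal.ofReal (1 - lam) • Measure.dirac t' :=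
      Function.update_self _ _ _
    rw [hupd] at hint
    have hint1 : Integrable f (ENNReal.ofReal lam • ν i) :=
      (integrable_add_measure.mp hint).1
    have hint2 : Integrable f (ENNReal.ofReal (1 - lam) • Measure.dirac t') :=
      (integrable_add_measure.mp hint).2
    have hlam_half' : lam ≤ 1/2 := by
      rw [hlam, div_le_div_iff₀ (by positivity) (by norm_num)]
      nlinarith [abs_nonneg c]
    have h1lam : (0:ℝ) < 1 - lam := by linarith
    have hne2 : ENNReal.ofReal (1 - lam) ≠ ⊤ := ENNReal.ofReal_ne_top
    have hne0 : ENNReal.ofReal (1 - lam) ≠ 0 := by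
      simp only [ne_eq, ENNReal.ofReal_eq_zero, not_le]; linarith
    have hintd : Integrable f (Measure.dirac t') :=
      (integrable_smul_measure hne0 hne2).mp hint2
    have hkey := hNE _ hmem i γi
    rw [hupd, integral_add_measure hint1 hint2, integral_smul_measure,
        integral_smul_measure, integral_dirac_of_integrable hintd,
        ENNReal.toReal_ofReal (le_of_lt hlam0), ENNReal.toReal_ofReal h1lam.le] at hkey
    have : lam * c + (1 - lam) * d > 0 := by
      have hac : -|c| ≤ c := neg_abs_le c
      nlinarith
    simp only [smul_eq_mul, ← hf, ← hc, ← hd] at hkey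
    linarith
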